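/- Let D = {(0,0), (1,0), (0,1), (-1,-1)} ⊂ ℤ² and define the mask polynomial m_D(ξ) = (1/4)·∑_{d∈D} e^{2πi⟨d,ξ⟩} for ξ ∈ ℝ². Then the zero set of m_D is exactly (1/2)·{(ℓ₁,ℓ₂) : ℓ₁,ℓ₂ ∈ {0,1}, (ℓ₁,ℓ₂) ≠ (0,0)} + ℤ². -/
import Mathlib


open Complex

/-- The mask polynomial of a finite digit set `D ⊂ ℝ²`:
`m_D(ξ) = (1/#D) ∑_{d ∈ D} e^{2πi⟨d,ξ⟩}`. -/
noncomputable def maskD (D : Finset (ℝ × ℝ)) (ξ : ℝ × ℝ) : ℂ :=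
  (D.card : ℂ)⁻¹ * ∑ d ∈ D,
    Complex.exp (2 * (Real.pi : ℂ) * Complex.I * ((d.1 * ξ.1 + d.2 * ξ.2 : ℝ) : ℂ))

lemma cos_pi_zero_iff (t : ℝ) : Real.cos (Real.pi * t) = 0 ↔ ∃ k : ℤ, t = 1/2 + k := by
  rw [Real.cos_eq_zero_iff]
  constructor
  · rintro ⟨k, hk⟩
    refine ⟨k, ?_⟩
    have h2 : Real.pi * t = Real.pi * (1/2 + k) := by rw [hk]; ring
    exact mul_left_cancel₀ Real.pi_ne_zero h2
  · rintro ⟨k, hk⟩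
    exact ⟨k, by rw [hk]; ring⟩

lemma sin_pi_zero_iff (t : ℝ) : Real.sin (Real.pi * t) = 0 ↔ ∃ k : ℤ, t = k := by
  rw [Real.sin_eq_zero_iff]
  constructor
  · rintro ⟨k, hk⟩
    refine ⟨k, ?_⟩
    have h2 : Real.pi * t = Real.pi * k := by linarith
    exact mul_left_cancel₀ Real.pi_ne_zero h2
  · rintro ⟨k, hk⟩
    exact ⟨k, by rw [hk]; ring⟩

lemma key (x y : ℝ) :
    1 + Complex.exp (2*(Real.pi:ℂ)*I*x) + Complex.exp (2*(Real.pi:ℂ)*I*y)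
      + Complex.exp (2*(Real.pi:ℂ)*I*(-x-y)) =
    4 * (((Real.cos (Real.pi*x) * Real.cos (Real.pi*y) * Real.cos (Real.pi*(x+y)) : ℝ) : ℂ)
      + I * ((Real.sin (Real.pi*x) * Real.sin (Real.pi*y) * Real.sin (Real.pi*(x+y)) : ℝ) : ℂ)) := by
  have ha : Complex.exp ((Real.pi:ℂ)*x*I) ≠ 0 := Complex.exp_ne_zero _
  have hb : Complex.exp ((Real.pi:ℂ)*y*I) ≠ 0 := Complex.exp_ne_zero _
  push_cast [Complex.ofReal_cos, Complex.ofReal_sin]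
  rw [Complex.cos, Complex.cos, Complex.cos, Complex.sin, Complex.sin, Complex.sin]
  have e1 : Complex.exp (2*(Real.pi:ℂ)*I*x) = Complex.exp ((Real.pi:ℂ)*x*I) ^ 2 := by
    rw [← Complex.exp_nat_mul]; ring_nf
  have e2 : Complex.exp (2*(Real.pi:ℂ)*I*y) = Complex.exp ((Real.pi:ℂ)*y*I) ^ 2 := by
    rw [← Complex.exp_nat_mul]; ring_nf
  have e3 : Complex.exp (2*(Real.pi:ℂ)*I*(-x-y)) =
      (Complex.exp ((Real.pi:ℂ)*x*I))⁻¹ ^ 2 * (Complex.exp ((Real.pi:ℂ)*y*I))⁻¹ ^ 2 := by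
    rw [← Complex.exp_neg, ← Complex.exp_neg, ← Complex.exp_nat_mul, ← Complex.exp_nat_mul,
      ← Complex.exp_add]
    ring_nf
  have e4 : Complex.exp (-((Real.pi:ℂ)*x) * I) = (Complex.exp ((Real.pi:ℂ)*x*I))⁻¹ := by
    rw [← Complex.exp_neg]; ring_nf
  have e5 : Complex.exp (-((Real.pi:ℂ)*y) * I) = (Complex.exp ((Real.pi:ℂ)*y*I))⁻¹ := by
    rw [← Complex.exp_neg]; ring_nf
  have e6 : Complex.exp (((Real.pi:ℂ)*(x+y)) * I) =
      Complex.exp ((Real.pi:ℂ)*x*I) * Complex.exp ((Real.pi:ℂ)*y*I) := by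
    rw [← Complex.exp_add]; ring_nf
  have e7 : Complex.exp (-((Real.pi:ℂ)*(x+y)) * I) =
      (Complex.exp ((Real.pi:ℂ)*x*I))⁻¹ * (Complex.exp ((Real.pi:ℂ)*y*I))⁻¹ := by
    rw [← Complex.exp_neg, ← Complex.exp_neg, ← Complex.exp_add]; ring_nf
  rw [e1, e2, e3, e4, e5, e6, e7]
  have hI4 : (I:ℂ)^4 = 1 := by norm_num
  field_simp
  ring_nf
  rw [hI4]
  ring

lemma notCZ (t : ℝ) (h1 : ∃ k:ℤ, t = (k:ℝ)) (h2 : ∃ k:ℤ, t = 1/2 + (k:ℝ)) : False := by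
  obtain ⟨a, ha⟩ := h1
  obtain ⟨b, hb⟩ := h2
  have h : ((2*a : ℤ) : ℝ) = ((2*b+1 : ℤ) : ℝ) := by push_cast; linarith
  have := Int.cast_injective h
  omega

lemma arith (x y : ℝ) :
    (((∃ k:ℤ, x = 1/2 + (k:ℝ)) ∨ (∃ k:ℤ, y = 1/2 + (k:ℝ)) ∨ (∃ k:ℤ, x + y = 1/2 + (k:ℝ))) ∧
     ((∃ k:ℤ, x = (k:ℝ)) ∨ (∃ k:ℤ, y = (k:ℝ)) ∨ (∃ k:ℤ, x + y = (k:ℝ)))) ↔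
    (((∃ k:ℤ, x = 1/2 + (k:ℝ)) ∧ (∃ k:ℤ, y = (k:ℝ))) ∨
     ((∃ k:ℤ, x = (k:ℝ)) ∧ (∃ k:ℤ, y = 1/2 + (k:ℝ))) ∨
     ((∃ k:ℤ, x = 1/2 + (k:ℝ)) ∧ (∃ k:ℤ, y = 1/2 + (k:ℝ)))) := by
  constructor
  · rintro ⟨(⟨a,ha⟩|⟨a,ha⟩|⟨a,ha⟩), (⟨b,hb⟩|⟨b,hb⟩|⟨b,hb⟩)⟩
    · exact (notCZ x ⟨b,hb⟩ ⟨a,ha⟩).elim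
    · exact Or.inl ⟨⟨a,ha⟩, ⟨b,hb⟩⟩
    · exact Or.inr (Or.inr ⟨⟨a,ha⟩, ⟨b - a - 1, by push_cast; linarith⟩⟩)
    · exact Or.inr (Or.inl ⟨⟨b,hb⟩, ⟨a,ha⟩⟩)
    · exact (notCZ y ⟨b,hb⟩ ⟨a,ha⟩).elim
    · exact Or.inr (Or.inr ⟨⟨b - a - 1, by push_cast; linarith⟩, ⟨a,ha⟩⟩)
    · exact Or.inr (Or.inl ⟨⟨b,hb⟩, ⟨a - b, by push_cast; linarith⟩⟩)
    · exact Or.inl ⟨⟨a - b, by push_cast; linarith⟩, ⟨b,hb⟩⟩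
    · exact (notCZ (x+y) ⟨b,hb⟩ ⟨a,ha⟩).elim
  · rintro (⟨⟨a,ha⟩,⟨b,hb⟩⟩|⟨⟨a,ha⟩,⟨b,hb⟩⟩|⟨⟨a,ha⟩,⟨b,hb⟩⟩)
    · exact ⟨Or.inl ⟨a,ha⟩, Or.inr (Or.inl ⟨b,hb⟩)⟩
    · exact ⟨Or.inr (Or.inl ⟨b,hb⟩), Or.inl ⟨a,ha⟩⟩
    · exact ⟨Or.inl ⟨a,ha⟩, Or.inr (Or.inr ⟨a+b+1, by push_cast; linarith⟩)⟩

lemma re_im_zero (c s : ℝ) : (c:ℂ) + I*(s:ℂ) = 0 ↔ c = 0 ∧ s = 0 := by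
  simp [Complex.ext_iff]

lemma mask_eval (x y : ℝ) :
    maskD ({((0:ℝ),(0:ℝ)), (1,0), (0,1), (-1,-1)} : Finset (ℝ × ℝ)) (x,y) =
    (4:ℂ)⁻¹ * (1 + Complex.exp (2*(Real.pi:ℂ)*I*x) + Complex.exp (2*(Real.pi:ℂ)*I*y)
      + Complex.exp (2*(Real.pi:ℂ)*I*(-x-y))) := by
  have h1 : ((0:ℝ),(0:ℝ)) ∉ ({(1,0), (0,1), (-1,-1)} : Finset (ℝ × ℝ)) := by
    norm_num [Prod.ext_iff]
  have h2 : ((1:ℝ),(0:ℝ)) ∉ ({(0,1), (-1,-1)} : Finset (ℝ × ℝ)) := by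
    norm_num [Prod.ext_iff]
  have h3 : ((0:ℝ),(1:ℝ)) ∉ ({(-1,-1)} : Finset (ℝ × ℝ)) := by
    norm_num [Prod.ext_iff]
  rw [maskD, Finset.sum_insert h1, Finset.sum_insert h2, Finset.sum_insert h3,
    Finset.sum_singleton, Finset.card_insert_of_notMem h1,
    Finset.card_insert_of_notMem h2, Finset.card_insert_of_notMem h3, Finset.card_singleton]
  norm_num
  ring_nf

/-- for `D = {(0,0),(1,0),(0,1),(-1,-1)}`, the zero set of `m_D` is
exactly `(1/2)·{(1,0),(0,1),(1,1)} + ℤ²`. -/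
theorem stmt_0 :
    {ξ : ℝ × ℝ |
        maskD ({((0:ℝ),(0:ℝ)), (1,0), (0,1), (-1,-1)} : Finset (ℝ × ℝ)) ξ = 0}
      = {ξ : ℝ × ℝ | ∃ l ∈ ({((1:ℝ),(0:ℝ)), (0,1), (1,1)} : Set (ℝ × ℝ)),
          ∃ k : ℤ × ℤ, ξ = ((1/2) * l.1 + (k.1 : ℝ), (1/2) * l.2 + (k.2 : ℝ))} := by
  ext ⟨x, y⟩
  simp only [Set.mem_setOf_eq]
  rw [mask_eval x y, key x y]
  have h4 : ((4:ℂ)⁻¹ : ℂ) ≠ 0 := by norm_num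
  rw [mul_eq_zero, mul_eq_zero]
  have hre := re_im_zero (Real.cos (Real.pi*x) * Real.cos (Real.pi*y) * Real.cos (Real.pi*(x+y)))
      (Real.sin (Real.pi*x) * Real.sin (Real.pi*y) * Real.sin (Real.pi*(x+y)))
  constructor
  · rintro (h | (h | h))
    · exact absurd h h4
    · exact absurd h (by norm_num)
    · have hc := (hre.mp h).1
      have hs := (hre.mp h).2
      rw [mul_eq_zero, mul_eq_zero, cos_pi_zero_iff, cos_pi_zero_iff, cos_pi_zero_iff] at hc
      rw [mul_eq_zero, mul_eq_zero, sin_pi_zero_iff, sin_pi_zero_iff, sin_pi_zero_iff] at hs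
      have := (arith x y).mp ⟨or_assoc.mp hc, or_assoc.mp hs⟩
      rcases this with (⟨⟨a,ha⟩,⟨b,hb⟩⟩|⟨⟨a,ha⟩,⟨b,hb⟩⟩|⟨⟨a,ha⟩,⟨b,hb⟩⟩)
      · exact ⟨(1,0), by norm_num, (a,b), by simp [ha, hb]⟩
      · exact ⟨(0,1), by norm_num [Prod.ext_iff], (a,b), by simp [ha, hb]⟩
      · exact ⟨(1,1), by norm_num [Prod.ext_iff], (a,b), by simp [ha, hb]⟩
  · rintro ⟨l, hl, ⟨a, b⟩, hk⟩
    refine Or.inr (Or.inr (hre.mpr ?_))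
    simp only [Set.mem_insert_iff, Set.mem_singleton_iff] at hl
    rw [Prod.ext_iff] at hk
    simp only at hk
    rw [mul_eq_zero, mul_eq_zero, cos_pi_zero_iff, cos_pi_zero_iff, cos_pi_zero_iff,
      mul_eq_zero, mul_eq_zero, sin_pi_zero_iff, sin_pi_zero_iff, sin_pi_zero_iff]
    have harith : (((∃ k:ℤ, x = 1/2 + (k:ℝ)) ∧ (∃ k:ℤ, y = (k:ℝ))) ∨
        ((∃ k:ℤ, x = (k:ℝ)) ∧ (∃ k:ℤ, y = 1/2 + (k:ℝ))) ∨
        ((∃ k:ℤ, x = 1/2 + (k:ℝ)) ∧ (∃ k:ℤ, y = 1/2 + (k:ℝ)))) := ?_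
    · obtain ⟨hc, hs⟩ := (arith x y).mpr harith
      exact ⟨or_assoc.mpr hc, or_assoc.mpr hs⟩
    rcases hl with rfl | rfl | rfl
    · exact Or.inl ⟨⟨a, by rw [hk.1]; norm_num⟩, ⟨b, by rw [hk.2]; norm_num⟩⟩
    · exact Or.inr (Or.inl ⟨⟨a, by rw [hk.1]; norm_num⟩, ⟨b, by rw [hk.2]; norm_num⟩⟩)
    · exact Or.inr (Or.inr ⟨⟨a, by rw [hk.1]; norm_num⟩, ⟨b, by rw [hk.2]; norm_num⟩⟩)
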